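/- arXiv:2211.10507 — 6 statements merged into one kernel-verified Lean document; each statement's English description precedes it below -/
import Mathlib

section
/- Let S be a d×r real matrix such that A := S Sᵀ is invertible, and let v_i, v_j be two distinct columns of S. Then 1 − v_iᵀ A⁻¹ v_i ≥ 0, and |v_iᵀ A⁻¹ v_j| ≤ sqrt((1 − v_iᵀ A⁻¹ v_i)(1 − v_jᵀ A⁻¹ v_j)). -/
open Matrix

theorem inner_product_bounds (d r : ℕ) (S : Matrix (Fin d) (Fin r) ℝ)
    (hA : IsUnit (S * Sᵀ).det) (i j : Fin r) (hij : i ≠ j) :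
    0 ≤ 1 - (fun x => S x i) ⬝ᵥ (S * Sᵀ)⁻¹.mulVec (fun x => S x i) ∧
    |(fun x => S x i) ⬝ᵥ (S * Sᵀ)⁻¹.mulVec (fun x => S x j)|
      ≤ Real.sqrt ((1 - (fun x => S x i) ⬝ᵥ (S * Sᵀ)⁻¹.mulVec (fun x => S x i))
          * (1 - (fun x => S x j) ⬝ᵥ (S * Sᵀ)⁻¹.mulVec (fun x => S x j))) := by
  set A := S * Sᵀ with hAdef
  set P := Sᵀ * A⁻¹ * S with hPdef
  have hAsym : Aᵀ = A := by simp [hAdef, Matrix.transpose_mul]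
  have hinv_sym : (A⁻¹)ᵀ = A⁻¹ := by rw [Matrix.transpose_nonsing_inv, hAsym]
  have h1 : A * A⁻¹ = 1 := Matrix.mul_nonsing_inv _ hA
  have hP2 : P * P = P := by
    rw [hPdef]
    calc Sᵀ * A⁻¹ * S * (Sᵀ * A⁻¹ * S)
        = Sᵀ * A⁻¹ * (A * A⁻¹) * S := by rw [hAdef]; simp only [Matrix.mul_assoc]
      _ = Sᵀ * A⁻¹ * S := by rw [h1, Matrix.mul_one]
  have hPsym : Pᵀ = P := by
    rw [hPdef]; simp [Matrix.transpose_mul, hinv_sym, Matrix.mul_assoc]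
  set Q : Matrix (Fin r) (Fin r) ℝ := 1 - P with hQdef
  have hQsym : Qᵀ = Q := by rw [hQdef, Matrix.transpose_sub, Matrix.transpose_one, hPsym]
  have hQ2 : Q * Q = Q := by
    rw [hQdef, Matrix.sub_mul, Matrix.mul_sub, Matrix.mul_sub, hP2]
    simp
  have hQpsd : Q.PosSemidef := by
    have h := Matrix.posSemidef_conjTranspose_mul_self Q
    rwa [show Qᴴ = Q by rw [Matrix.conjTranspose_eq_transpose_of_trivial, hQsym], hQ2] at h
  have key : ∀ x : Fin r → ℝ, 0 ≤ x ⬝ᵥ Q.mulVec x := by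
    intro x
    have h := hQpsd.dotProduct_mulVec_nonneg x
    simpa using h
  -- entries of P are the inner products
  have hentry : ∀ a b : Fin r,
      (fun x => S x a) ⬝ᵥ A⁻¹.mulVec (fun x => S x b) = P a b := by
    intro a b
    rw [hPdef]
    simp [Matrix.mul_apply, Matrix.mulVec, dotProduct, Finset.mul_sum, Finset.sum_mul]
    rw [Finset.sum_comm]
    ring_nf
  -- diagonal: 1 - P a a = Q a a
  have hdiag : ∀ a : Fin r,
      1 - (fun x => S x a) ⬝ᵥ A⁻¹.mulVec (fun x => S x a) = Q a a := by
    intro a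
    rw [hentry a a, hQdef]
    simp [Matrix.sub_apply, Matrix.one_apply_eq]
  -- off-diagonal: P i j = - Q i j
  have hoff : (fun x => S x i) ⬝ᵥ A⁻¹.mulVec (fun x => S x j) = -(Q i j) := by
    rw [hentry i j, hQdef]
    simp [Matrix.sub_apply, Matrix.one_apply_ne hij]
  have hsym : Q j i = Q i j := by nth_rewrite 1 [← hQsym]; rfl
  have hQii : 0 ≤ Q i i := by
    have h := key (Pi.single i 1)
    simpa using h
  have hCS : (Q i j)^2 ≤ Q i i * Q j j := by
    have hquad : ∀ t : ℝ, 0 ≤ Q i i * (t * t) + (2 * Q i j) * t + Q j j := by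
      intro t
      have h := key (Pi.single i t + Pi.single j 1)
      simp only [Matrix.mulVec_add, dotProduct_add, add_dotProduct,
        Matrix.mulVec_single, single_dotProduct, Pi.add_apply, Pi.smul_apply,
        op_smul_eq_mul, Matrix.col_apply, mul_one] at h
      rw [hsym] at h
      nlinarith [h]
    have hd := discrim_le_zero hquad
    rw [discrim] at hd
    nlinarith [hd]
  constructor
  · rw [hdiag i]; exact hQii
  · rw [hoff, hdiag i, hdiag j, abs_neg]
    exact Real.abs_le_sqrt hCS
end

section
/- Let S be a d×r real matrix such that A := S Sᵀ is invertible, and let Y be a d×m matrix whose columns are a subset of the columns of S. Then det(I_m − Yᵀ A⁻¹ Y) ≥ 0. -/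
open Matrix

lemma posSemidef_det_nonneg {n : ℕ} {M : Matrix (Fin n) (Fin n) ℝ}
    (hM : M.PosSemidef) : 0 ≤ M.det := by
  rw [hM.isHermitian.det_eq_prod_eigenvalues]
  apply Finset.prod_nonneg
  intro i _
  simpa using hM.eigenvalues_nonneg i

theorem det_sub_columns_nonneg (d r m : ℕ) (S : Matrix (Fin d) (Fin r) ℝ)
    (hA : IsUnit (S * Sᵀ).det)
    (g : Fin m → Fin r) (hg : Function.Injective g)
    (Y : Matrix (Fin d) (Fin m) ℝ) (hY : Y = fun x k => S x (g k)) :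
    0 ≤ (1 - Yᵀ * (S * Sᵀ)⁻¹ * Y).det := by
  set A : Matrix (Fin d) (Fin d) ℝ := S * Sᵀ with hAdef
  have hinv : A * A⁻¹ = 1 := Matrix.mul_nonsing_inv A hA
  -- selection matrix
  set P : Matrix (Fin r) (Fin m) ℝ := fun i k => if i = g k then 1 else 0 with hP
  have hSP : S * P = Y := by
    rw [hY]
    ext x k
    simp only [Matrix.mul_apply]
    simp [hP]
  have hPtP : Pᵀ * P = 1 := by
    ext k l
    simp only [Matrix.mul_apply, Matrix.transpose_apply, Matrix.one_apply]
    simp only [hP]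
    rw [Finset.sum_eq_single (g k)]
    · simp [hg.eq_iff, eq_comm]
    · intro b _ hb
      simp [hb]
    · simp
  set Q : Matrix (Fin r) (Fin r) ℝ := Sᵀ * A⁻¹ * S with hQ
  have hAsymm : Aᵀ = A := by rw [hAdef, Matrix.transpose_mul, Matrix.transpose_transpose]
  have hQsymm : Qᵀ = Q := by
    rw [hQ, Matrix.transpose_mul, Matrix.transpose_mul, Matrix.transpose_nonsing_inv,
      hAsymm, Matrix.transpose_transpose, Matrix.mul_assoc]
  have hQidem : Q * Q = Q := by
    rw [hQ]
    calc Sᵀ * A⁻¹ * S * (Sᵀ * A⁻¹ * S)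
        = Sᵀ * A⁻¹ * ((S * Sᵀ) * A⁻¹) * S := by
          simp only [Matrix.mul_assoc]
      _ = Sᵀ * A⁻¹ * S := by rw [← hAdef, hinv, Matrix.mul_one]
  have hYQ : Yᵀ * A⁻¹ * Y = Pᵀ * Q * P := by
    rw [← hSP, Matrix.transpose_mul, hQ]
    simp only [Matrix.mul_assoc]
  have key : 1 - Yᵀ * A⁻¹ * Y = ((1 - Q) * P)ᵀ * ((1 - Q) * P) := by
    have h1 : (1 - Q)ᵀ * (1 - Q) = 1 - Q := by
      rw [Matrix.transpose_sub, Matrix.transpose_one, hQsymm, Matrix.sub_mul,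
        Matrix.mul_sub, Matrix.mul_sub, hQidem]
      simp
    rw [hYQ, Matrix.transpose_mul, Matrix.mul_assoc Pᵀ (1 - Q)ᵀ, ← Matrix.mul_assoc (1 - Q)ᵀ, h1]
    rw [Matrix.sub_mul, Matrix.one_mul, Matrix.mul_sub, hPtP, Matrix.mul_assoc]
  rw [key]
  have : (((1 - Q) * P)ᵀ * ((1 - Q) * P)).PosSemidef := by
    have := Matrix.posSemidef_conjTranspose_mul_self ((1 - Q) * P)
    simpa [Matrix.conjTranspose_eq_transpose_of_trivial] using this
  exact posSemidef_det_nonneg this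
end

section
/- Let A = S Sᵀ be positive definite where S is a d×r real matrix, and let u, v ∈ ℝ^d. Then det(A − vvᵀ + uuᵀ)/det(A) = (uᵀ A⁻¹ v)² + (1 + uᵀ A⁻¹ u)(1 − vᵀ A⁻¹ v). -/
open Matrix

lemma entry_dot (d : ℕ) (M : Matrix (Fin d) (Fin d) ℝ) (a b : Fin d → ℝ) :
    (∑ j, (∑ i, a i * M i j) * b j) = a ⬝ᵥ M.mulVec b := by
  simp only [dotProduct, Matrix.mulVec, Finset.sum_mul, Finset.mul_sum]
  rw [Finset.sum_comm]
  simp [dotProduct, mul_assoc]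

theorem rank_two_det_update (d r : ℕ) (S : Matrix (Fin d) (Fin r) ℝ)
    (hA : (S * Sᵀ).PosDef) (u v : Fin d → ℝ) :
    (S * Sᵀ - vecMulVec v v + vecMulVec u u).det / (S * Sᵀ).det
      = (u ⬝ᵥ (S * Sᵀ)⁻¹.mulVec v) ^ 2
        + (1 + u ⬝ᵥ (S * Sᵀ)⁻¹.mulVec u) * (1 - v ⬝ᵥ (S * Sᵀ)⁻¹.mulVec v) := by
  set A := S * Sᵀ with hAdef
  have hdet : IsUnit A.det := isUnit_iff_ne_zero.mpr hA.det_pos.ne'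
  have hsym : Aᵀ = A := by rw [hAdef, Matrix.transpose_mul, Matrix.transpose_transpose]
  have hinv_sym : A⁻¹ᵀ = A⁻¹ := by rw [Matrix.transpose_nonsing_inv, hsym]
  have hcomm : v ⬝ᵥ A⁻¹.mulVec u = u ⬝ᵥ A⁻¹.mulVec v := by
    rw [Matrix.dotProduct_mulVec, ← Matrix.mulVec_transpose, hinv_sym, dotProduct_comm]
  set U : Matrix (Fin d) (Fin 2) ℝ := Matrix.of fun i k => ![u i, v i] k with hU
  set V : Matrix (Fin 2) (Fin d) ℝ := Matrix.of fun k j => ![u j, -v j] k with hV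
  have hUV : A - vecMulVec v v + vecMulVec u u = A + U * V := by
    ext i j
    simp [Matrix.mul_apply, vecMulVec_apply, Fin.sum_univ_two, hU, hV]
    ring
  rw [hUV, Matrix.det_add_mul U V hdet]
  have hmul : ∀ k l, (V * A⁻¹ * U) k l
      = (fun j => V k j) ⬝ᵥ A⁻¹.mulVec (fun j => U j l) := by
    intro k l
    rw [← entry_dot]
    simp [Matrix.mul_apply]
  have e00 : (fun j => V 0 j) = u := by funext j; simp [hV]
  have e10 : (fun j => V 1 j) = -v := by funext j; simp [hV]
  have f0 : (fun j => U j 0) = u := by funext j; simp [hU]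
  have f1 : (fun j => U j 1) = v := by funext j; simp [hU]
  have a00 : ((1 + V * A⁻¹ * U : Matrix (Fin 2) (Fin 2) ℝ)) 0 0 = 1 + u ⬝ᵥ A⁻¹.mulVec u := by
    rw [Matrix.add_apply, hmul, e00, f0, Matrix.one_apply_eq]
  have a01 : ((1 + V * A⁻¹ * U : Matrix (Fin 2) (Fin 2) ℝ)) 0 1 = u ⬝ᵥ A⁻¹.mulVec v := by
    rw [Matrix.add_apply, hmul, e00, f1, Matrix.one_apply_ne (by decide), zero_add]
  have a10 : ((1 + V * A⁻¹ * U : Matrix (Fin 2) (Fin 2) ℝ)) 1 0 = -(v ⬝ᵥ A⁻¹.mulVec u) := by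
    rw [Matrix.add_apply, hmul, e10, f0, Matrix.one_apply_ne (by decide), zero_add,
      neg_dotProduct]
  have a11 : ((1 + V * A⁻¹ * U : Matrix (Fin 2) (Fin 2) ℝ)) 1 1 = 1 - v ⬝ᵥ A⁻¹.mulVec v := by
    rw [Matrix.add_apply, hmul, e10, f1, Matrix.one_apply_eq, neg_dotProduct]
    ring
  rw [mul_comm, mul_div_assoc, div_self hA.det_pos.ne', mul_one, Matrix.det_fin_two,
    a00, a01, a10, a11, hcomm]
  ring
end

section
/- Let A be an ℓ×ℓ positive definite real matrix, C an ℓ×ℓ positive semidefinite real matrix, and B an ℓ×ℓ real matrix. Then det([[A, B],[−Bᵀ, C]]) ≥ det(B)². -/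
open Matrix

/-- A positive semidefinite real matrix has nonnegative determinant. -/
lemma psd_det_nonneg {n : Type*} [Fintype n] [DecidableEq n] {M : Matrix n n ℝ}
    (hM : M.PosSemidef) : 0 ≤ M.det := by
  rw [hM.1.det_eq_prod_eigenvalues]
  exact Finset.prod_nonneg fun i _ => by simpa using hM.eigenvalues_nonneg i

/-- `det (1 + N) ≥ 1` for `N` positive semidefinite. -/
lemma one_le_det_one_add {n : Type*} [Fintype n] [DecidableEq n] {N : Matrix n n ℝ}
    (hN : N.PosSemidef) : 1 ≤ (1 + N).det := by
  have hP : (1 + N).PosDef := (Matrix.PosDef.one).add_posSemidef hN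
  have herm := hP.1
  rw [herm.det_eq_prod_eigenvalues]
  norm_cast
  have h1 : ∀ i ∈ Finset.univ, (1:ℝ) ≤ herm.eigenvalues i := fun i _ => ?_
  · calc (1:ℝ) = ∏ _i : n, 1 := by simp
      _ ≤ ∏ i, herm.eigenvalues i :=
        Finset.prod_le_prod (fun i _ => zero_le_one) h1
  set lam := herm.eigenvalues i with hlam
  set v : n → ℝ := ⇑(herm.eigenvectorBasis i) with hv
  have hvne : v ≠ 0 := by
    intro h
    exact herm.eigenvectorBasis.orthonormal.ne_zero i (WithLp.ofLp_injective 2 (by simpa [hv] using h))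
  have hmv : (1 + N) *ᵥ v = lam • v := herm.mulVec_eigenvectorBasis i
  have hNv : N *ᵥ v = (lam - 1) • v := by
    rw [add_mulVec, one_mulVec] at hmv
    rw [sub_smul, one_smul, ← hmv]
    abel
  have h2 : (0:ℝ) ≤ v ⬝ᵥ (N *ᵥ v) := by simpa using hN.dotProduct_mulVec_nonneg v
  rw [hNv, dotProduct_smul] at h2
  have hvv : 0 < v ⬝ᵥ v := by
    have := dotProduct_self_star_pos_iff (v := v).mpr hvne
    simpa using this
  rw [smul_eq_mul] at h2
  nlinarith [h2, hvv]

open scoped MatrixOrder in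
/-- Adding a positive semidefinite matrix to a positive definite one does not
decrease the determinant. -/
lemma det_le_det_add_psd {n : Type*} [Fintype n] [DecidableEq n] {M N : Matrix n n ℝ}
    (hM : M.PosDef) (hN : N.PosSemidef) : M.det ≤ (M + N).det := by
  set S := CFC.sqrt M with hSdef
  have hS : S.PosSemidef := (CFC.sqrt_nonneg M).posSemidef
  have hSS : S * S = M := CFC.sqrt_mul_sqrt_self M hM.posSemidef.nonneg
  have hdetM : 0 < M.det := hM.det_pos
  have hdetS : S.det ≠ 0 := by
    intro h
    rw [← hSS, det_mul, h, mul_zero] at hdetM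
    exact lt_irrefl _ hdetM
  have hSunit : IsUnit S.det := isUnit_iff_ne_zero.mpr hdetS
  have hKpsd : (S⁻¹ * N * S⁻¹).PosSemidef := by
    have h := hN.conjTranspose_mul_mul_same (S⁻¹)
    rwa [hS.1.inv.eq] at h
  have key : M + N = S * (1 + S⁻¹ * N * S⁻¹) * S := by
    rw [Matrix.mul_add, Matrix.mul_one, Matrix.add_mul, hSS]
    congr 1
    rw [← Matrix.mul_assoc, ← Matrix.mul_assoc, Matrix.mul_nonsing_inv _ hSunit,
      Matrix.one_mul, Matrix.mul_assoc, Matrix.nonsing_inv_mul _ hSunit, Matrix.mul_one]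
  rw [key, det_mul, det_mul]
  have h1 : 1 ≤ (1 + S⁻¹ * N * S⁻¹).det := one_le_det_one_add hKpsd
  have hSdetpos : 0 < S.det * S.det := by
    have : S.det * S.det = M.det := by rw [← det_mul, hSS]
    rw [this]; exact hdetM
  calc M.det = S.det * 1 * S.det := by
        rw [mul_one, ← det_mul, hSS]
      _ ≤ S.det * (1 + S⁻¹ * N * S⁻¹).det * S.det := by
        nlinarith [hSdetpos]

/-- `Bᴴ * A * B` is positive definite when `A` is and `B` is invertible. -/
lemma posDef_conjTranspose_mul_mul {n : Type*} [Fintype n] [DecidableEq n]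
    {A : Matrix n n ℝ} (hA : A.PosDef) {B : Matrix n n ℝ} (hB : IsUnit B.det) :
    (Bᴴ * A * B).PosDef := by
  refine posDef_iff_dotProduct_mulVec.mpr ⟨isHermitian_conjTranspose_mul_mul B hA.1, fun x hx => ?_⟩
  have hBu : IsUnit B := (isUnit_iff_isUnit_det B).mpr hB
  have hinj := Matrix.mulVec_injective_iff_isUnit.mpr hBu
  have hBx : B *ᵥ x ≠ 0 := fun h => hx (hinj (by simpa using h))
  simpa only [star_mulVec, dotProduct_mulVec, vecMul_vecMul] using hA.dotProduct_mulVec_pos hBx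

theorem block_det_ge_det_sq (l : ℕ) (A C B : Matrix (Fin l) (Fin l) ℝ)
    (hA : A.PosDef) (hC : C.PosSemidef) :
    (Matrix.fromBlocks A B (-Bᵀ) C).det ≥ B.det ^ 2 := by
  haveI := A.invertibleOfIsUnitDet hA.det_pos.ne'.isUnit
  rw [det_fromBlocks₁₁, invOf_eq_nonsing_inv]
  have hsub : C - (-Bᵀ) * A⁻¹ * B = C + Bᵀ * A⁻¹ * B := by
    rw [Matrix.neg_mul, Matrix.neg_mul, sub_neg_eq_add]
  rw [hsub]
  have hAinv : A⁻¹.PosDef := hA.inv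
  have hMpsd : (Bᵀ * A⁻¹ * B).PosSemidef := by
    have h := hAinv.posSemidef.conjTranspose_mul_mul_same B
    rwa [conjTranspose_eq_transpose_of_trivial] at h
  by_cases hB : IsUnit B.det
  · have hMpos : (Bᵀ * A⁻¹ * B).PosDef := by
      have h := posDef_conjTranspose_mul_mul hAinv hB
      rwa [conjTranspose_eq_transpose_of_trivial] at h
    have h1 : (Bᵀ * A⁻¹ * B).det ≤ (C + Bᵀ * A⁻¹ * B).det := by
      rw [add_comm]
      exact det_le_det_add_psd hMpos hC
    have hdetM : (Bᵀ * A⁻¹ * B).det = B.det ^ 2 * (A.det)⁻¹ := by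
      rw [det_mul, det_mul, det_transpose, det_nonsing_inv, Ring.inverse_eq_inv']
      ring
    have hApos := hA.det_pos
    have : A.det * (Bᵀ * A⁻¹ * B).det = B.det ^ 2 := by
      rw [hdetM]; field_simp
    calc B.det ^ 2 = A.det * (Bᵀ * A⁻¹ * B).det := this.symm
      _ ≤ A.det * (C + Bᵀ * A⁻¹ * B).det := by
          exact mul_le_mul_of_nonneg_left h1 hApos.le
  · have hB0 : B.det = 0 := by
      by_contra h
      exact hB (isUnit_iff_ne_zero.mpr h)
    rw [hB0]
    have : 0 ≤ A.det * (C + Bᵀ * A⁻¹ * B).det :=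
      mul_nonneg hA.det_pos.le (psd_det_nonneg (hC.add hMpsd))
    simpa using this
end

section
/- Let S, T be d×r real matrices with S Sᵀ positive definite, and suppose T Tᵀ = S Sᵀ − V_Y V_Yᵀ + V_X V_Xᵀ where V_X, V_Y are d×ℓ matrices with I_ℓ − V_Yᵀ(S Sᵀ)⁻¹V_Y positive semidefinite. Then det(T Tᵀ) ≥ det(S Sᵀ) · det(V_Xᵀ (S Sᵀ)⁻¹ V_Y)². -/
open Matrix

variable {n : Type*} [Fintype n] [DecidableEq n]

lemma psd_det_nonneg_s6 {N : Matrix n n ℝ} (hN : N.PosSemidef) : 0 ≤ N.det := by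
  rw [hN.1.det_eq_prod_eigenvalues]
  exact Finset.prod_nonneg fun i _ => hN.eigenvalues_nonneg i

lemma det_one_add_psd {N : Matrix n n ℝ} (hN : N.PosSemidef) : 1 ≤ (1 + N).det := by
  have hH := hN.1
  have hspec := hH.spectral_theorem
  set U : Matrix n n ℝ := (IsHermitian.eigenvectorUnitary hH : Matrix n n ℝ) with hUdef
  have h1 : U * star U = 1 :=
    Matrix.mem_unitaryGroup_iff.mp (IsHermitian.eigenvectorUnitary hH).2
  set D : Matrix n n ℝ := Matrix.diagonal (RCLike.ofReal ∘ hH.eigenvalues) with hDdef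
  have key : 1 + N = U * ((1 + D) * star U) := by
    rw [hspec, Unitary.conjStarAlgAut_apply, add_mul, one_mul, mul_add, ← mul_assoc, h1]
  have hdetU : U.det * (star U).det = 1 := by
    rw [← det_mul, h1, det_one]
  rw [key, det_mul, det_mul]
  have hd : (1 + D).det = ∏ i, (1 + hH.eigenvalues i) := by
    rw [hDdef]
    rw [show (1 : Matrix n n ℝ) = Matrix.diagonal (fun _ => (1:ℝ)) by simp, diagonal_add,
      det_diagonal]
    simp [RCLike.ofReal]
  have hprod : 1 ≤ (1 + D).det := by
    rw [hd]
    have := Finset.prod_le_prod (s := Finset.univ) (f := fun _ : n => (1:ℝ))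
      (g := fun i => 1 + hH.eigenvalues i) (fun i _ => zero_le_one)
      (fun i _ => by have h := hN.eigenvalues_nonneg i; simp only [le_add_iff_nonneg_right]; exact h)
    simpa using this
  calc (1:ℝ) ≤ (1 + D).det := hprod
    _ = (1 + D).det * (U.det * (star U).det) := by rw [hdetU, mul_one]
    _ = U.det * ((1 + D).det * (star U).det) := by ring

lemma psd_det_le_det_add {X Y : Matrix n n ℝ} (hX : X.PosSemidef) (hY : Y.PosSemidef) :
    Y.det ≤ (X + Y).det := by
  by_cases h : IsUnit Y.det
  · obtain ⟨C, hC⟩ : ∃ C : Matrix n n ℝ, X = Cᴴ * C := by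
      open scoped MatrixOrder in
      obtain ⟨B, hB, -, hBB⟩ := CFC.exists_sqrt_of_isSelfAdjoint_of_quasispectrumRestricts
        hX.isHermitian (QuasispectrumRestricts.nnreal_of_nonneg hX.nonneg)
      exact ⟨B, hBB.symm.trans (by rw [show Bᴴ = B from hB.star_eq])⟩
    have hYinv : Y⁻¹.PosSemidef := hY.inv
    have key : X + Y = Y * (1 + Y⁻¹ * X) := by
      rw [mul_add, mul_one, ← Matrix.mul_assoc, mul_nonsing_inv _ h, Matrix.one_mul, add_comm]
    rw [key, det_mul]
    have h2 : (1 + Y⁻¹ * X).det = (1 + C * (Y⁻¹ * Cᴴ)).det := by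
      rw [hC, ← Matrix.mul_assoc, det_one_add_mul_comm]
    have hpsd : (C * (Y⁻¹ * Cᴴ)).PosSemidef := by
      have := hYinv.mul_mul_conjTranspose_same C
      rwa [Matrix.mul_assoc] at this
    have h3 := det_one_add_psd hpsd
    have hYdet : 0 ≤ Y.det := psd_det_nonneg_s6 hY
    calc Y.det = Y.det * 1 := (mul_one _).symm
      _ ≤ Y.det * (1 + Y⁻¹ * X).det := by
          rw [h2]; exact mul_le_mul_of_nonneg_left h3 hYdet
  · have h0 : Y.det = 0 := by
      by_contra hne
      exact h (isUnit_iff_ne_zero.mpr hne)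
    rw [h0]
    exact psd_det_nonneg_s6 (hX.add hY)

theorem swap_det_lower_bound (d r l : ℕ) (S T : Matrix (Fin d) (Fin r) ℝ)
    (hS : (S * Sᵀ).PosDef)
    (VX VY : Matrix (Fin d) (Fin l) ℝ)
    (hT : T * Tᵀ = S * Sᵀ - VY * VYᵀ + VX * VXᵀ)
    (hY : (1 - VYᵀ * (S * Sᵀ)⁻¹ * VY).PosSemidef) :
    (T * Tᵀ).det ≥ (S * Sᵀ).det * (VXᵀ * (S * Sᵀ)⁻¹ * VY).det ^ 2 := by
  classical
  set A := S * Sᵀ with hAdef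
  have hAdet : IsUnit A.det := hS.det_pos.ne'.isUnit
  have hAinv : A⁻¹.PosDef := hS.inv
  have hAinvT : A⁻¹ᵀ = A⁻¹ := by
    rw [← conjTranspose_eq_transpose_of_trivial]; exact hAinv.1
  set P := VXᵀ * A⁻¹ * VX with hPdef
  set G := VXᵀ * A⁻¹ * VY with hGdef
  set Q := VYᵀ * A⁻¹ * VY with hQdef
  have hGt : VYᵀ * A⁻¹ * VX = Gᵀ := by
    rw [hGdef, transpose_mul, transpose_mul, transpose_transpose, hAinvT, Matrix.mul_assoc]
  have hP : P.PosSemidef := by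
    have := hAinv.posSemidef.conjTranspose_mul_mul_same VX
    rwa [conjTranspose_eq_transpose_of_trivial] at this
  have h1P : (1 + P).PosDef := Matrix.PosDef.add_posSemidef Matrix.PosDef.one hP
  have h1Pdet : IsUnit (1 + P).det := h1P.det_pos.ne'.isUnit
  -- factor T Tᵀ
  have hTT : T * Tᵀ = A * (1 + A⁻¹ * (VX * VXᵀ - VY * VYᵀ)) := by
    rw [mul_add, mul_one, ← Matrix.mul_assoc, mul_nonsing_inv _ hAdet, Matrix.one_mul, hT]
    abel
  have hMN : A⁻¹ * (VX * VXᵀ - VY * VYᵀ)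
      = (A⁻¹ * fromCols VX VY) * fromRows VXᵀ (-(VYᵀ)) := by
    rw [Matrix.mul_assoc, fromCols_mul_fromRows]
    congr 1
    rw [Matrix.mul_neg, sub_eq_add_neg]
  have hblock : (1 : Matrix (Fin l ⊕ Fin l) (Fin l ⊕ Fin l) ℝ)
      + fromRows VXᵀ (-(VYᵀ)) * (A⁻¹ * fromCols VX VY)
      = fromBlocks (1 + P) G (-Gᵀ) (1 - Q) := by
    rw [mul_fromCols, fromRows_mul_fromCols, ← fromBlocks_one, fromBlocks_add]
    simp only [zero_add, Matrix.neg_mul, ← Matrix.mul_assoc, hGt, ← sub_eq_add_neg, zero_sub]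
    rfl
  have hdetTT : (T * Tᵀ).det = A.det * (fromBlocks (1 + P) G (-Gᵀ) (1 - Q)).det := by
    rw [hTT, det_mul, hMN, det_one_add_mul_comm, hblock]
  -- Schur complement
  haveI : Invertible (1 + P) := (1 + P).invertibleOfIsUnitDet h1Pdet
  have hschur : (fromBlocks (1 + P) G (-Gᵀ) (1 - Q)).det
      = (1 + P).det * ((1 - Q) + Gᵀ * (1 + P)⁻¹ * G).det := by
    rw [det_fromBlocks₁₁, invOf_eq_nonsing_inv]
    congr 1
    rw [Matrix.neg_mul, Matrix.neg_mul, sub_neg_eq_add]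
  set R := Gᵀ * (1 + P)⁻¹ * G with hRdef
  have hR : R.PosSemidef := by
    have := (h1P.inv).posSemidef.conjTranspose_mul_mul_same G
    rwa [conjTranspose_eq_transpose_of_trivial] at this
  have hRdet : R.det = G.det ^ 2 * ((1 + P).det)⁻¹ := by
    rw [hRdef, det_mul, det_mul, det_transpose, det_nonsing_inv, Ring.inverse_eq_inv]
    ring
  have hineq : R.det ≤ ((1 - Q) + R).det := psd_det_le_det_add hY hR
  have hne : (1 + P).det ≠ 0 := h1P.det_pos.ne'
  have h1 : (1 + P).det * R.det = G.det ^ 2 := by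
    rw [hRdet]; field_simp
  rw [ge_iff_le, hdetTT, hschur]
  calc A.det * G.det ^ 2 = A.det * ((1 + P).det * R.det) := by rw [h1]
    _ ≤ A.det * ((1 + P).det * ((1 - Q) + R).det) := by
        refine mul_le_mul_of_nonneg_left ?_ hS.det_pos.le
        exact mul_le_mul_of_nonneg_left hineq h1P.det_pos.le
end

section
/- Let A be a d×d positive definite matrix and u, v ∈ ℝ^d with (1 + uᵀA⁻¹u)(1 − vᵀA⁻¹v) + (uᵀA⁻¹v)² > 0. Let B = A + uuᵀ − vvᵀ. Then B is invertible and B⁻¹ − A⁻¹ = −a⁻² [ (1 − vᵀA⁻¹v)·A⁻¹uuᵀA⁻¹ + (uᵀA⁻¹v)·A⁻¹vuᵀA⁻¹ + (uᵀA⁻¹v)·A⁻¹uvᵀA⁻¹ − (1 + uᵀA⁻¹u)·A⁻¹vvᵀA⁻¹ ], where a² = (1 + uᵀA⁻¹u)(1 − vᵀA⁻¹v) + (uᵀA⁻¹v)². -/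
open Matrix

lemma vecMulVec_mul_mat {d : ℕ} (a b : Fin d → ℝ) (M : Matrix (Fin d) (Fin d) ℝ) :
    vecMulVec a b * M = vecMulVec a (vecMul b M) := by
  ext i j
  simp [vecMulVec_apply, mul_apply, vecMul, dotProduct, Finset.mul_sum, mul_assoc]

lemma mat_mul_vecMulVec {d : ℕ} (a b : Fin d → ℝ) (M : Matrix (Fin d) (Fin d) ℝ) :
    M * vecMulVec a b = vecMulVec (M.mulVec a) b := by
  ext i j
  simp [vecMulVec_apply, mul_apply, mulVec, dotProduct, Finset.sum_mul, mul_assoc]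

lemma vecMulVec_mulVec' {d : ℕ} (a b c : Fin d → ℝ) :
    (vecMulVec a b).mulVec c = (b ⬝ᵥ c) • a := by
  ext i
  simp [vecMulVec_apply, mulVec, dotProduct, Finset.mul_sum, mul_assoc]
  rw [Finset.sum_mul]
  exact Finset.sum_congr rfl fun k _ => by ring

lemma vecMulVec_smul_left {d : ℕ} (r : ℝ) (a b : Fin d → ℝ) :
    vecMulVec (r • a) b = r • vecMulVec a b := by
  ext i j
  simp [vecMulVec_apply, mul_assoc]

theorem rank_two_woodbury (d : ℕ) (A : Matrix (Fin d) (Fin d) ℝ) (hA : A.PosDef)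
    (u v : Fin d → ℝ)
    (ha : 0 < (1 + u ⬝ᵥ A⁻¹.mulVec u) * (1 - v ⬝ᵥ A⁻¹.mulVec v)
            + (u ⬝ᵥ A⁻¹.mulVec v) ^ 2) :
    IsUnit (A + vecMulVec u u - vecMulVec v v).det ∧
    (A + vecMulVec u u - vecMulVec v v)⁻¹ - A⁻¹ =
      -(((1 + u ⬝ᵥ A⁻¹.mulVec u) * (1 - v ⬝ᵥ A⁻¹.mulVec v)
          + (u ⬝ᵥ A⁻¹.mulVec v) ^ 2)⁻¹) •
        ((1 - v ⬝ᵥ A⁻¹.mulVec v) • (A⁻¹ * vecMulVec u u * A⁻¹)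
          + (u ⬝ᵥ A⁻¹.mulVec v) • (A⁻¹ * vecMulVec v u * A⁻¹)
          + (u ⬝ᵥ A⁻¹.mulVec v) • (A⁻¹ * vecMulVec u v * A⁻¹)
          - (1 + u ⬝ᵥ A⁻¹.mulVec u) • (A⁻¹ * vecMulVec v v * A⁻¹)) := by
  have hdet : IsUnit A.det := isUnit_iff_ne_zero.2 hA.det_pos.ne'
  have hAinv : A * A⁻¹ = 1 := A.mul_nonsing_inv hdet
  have hsym : A⁻¹ᵀ = A⁻¹ := by
    have h := (hA.isHermitian.inv).eq
    simpa using h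
  have hvmu : vecMul u A⁻¹ = A⁻¹.mulVec u := by nth_rewrite 1 [← hsym]; rw [vecMul_transpose]
  have hvmv : vecMul v A⁻¹ = A⁻¹.mulVec v := by nth_rewrite 1 [← hsym]; rw [vecMul_transpose]
  have hAp : A.mulVec (A⁻¹.mulVec u) = u := by
    rw [mulVec_mulVec, hAinv, one_mulVec]
  have hAq : A.mulVec (A⁻¹.mulVec v) = v := by
    rw [mulVec_mulVec, hAinv, one_mulVec]
  have hγ : v ⬝ᵥ A⁻¹.mulVec u = u ⬝ᵥ A⁻¹.mulVec v := by
    rw [dotProduct_mulVec, hvmv, dotProduct_comm]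
  have ha2ne : (1 + u ⬝ᵥ A⁻¹.mulVec u) * (1 - v ⬝ᵥ A⁻¹.mulVec v)
      + (u ⬝ᵥ A⁻¹.mulVec v) ^ 2 ≠ 0 := ha.ne'
  set a2i := ((1 + u ⬝ᵥ A⁻¹.mulVec u) * (1 - v ⬝ᵥ A⁻¹.mulVec v)
      + (u ⬝ᵥ A⁻¹.mulVec v) ^ 2)⁻¹ with ha2i
  set S := (1 - v ⬝ᵥ A⁻¹.mulVec v) • (A⁻¹ * vecMulVec u u * A⁻¹)
      + (u ⬝ᵥ A⁻¹.mulVec v) • (A⁻¹ * vecMulVec v u * A⁻¹)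
      + (u ⬝ᵥ A⁻¹.mulVec v) • (A⁻¹ * vecMulVec u v * A⁻¹)
      - (1 + u ⬝ᵥ A⁻¹.mulVec u) • (A⁻¹ * vecMulVec v v * A⁻¹) with hS
  have hinv : a2i * ((1 + u ⬝ᵥ A⁻¹.mulVec u) * (1 - v ⬝ᵥ A⁻¹.mulVec v)
      + (u ⬝ᵥ A⁻¹.mulVec v) ^ 2) = 1 := by
    rw [ha2i]; exact inv_mul_cancel₀ ha2ne
  clear_value a2i
  have hBC : (A + vecMulVec u u - vecMulVec v v) * (A⁻¹ - a2i • S) = 1 := by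
    rw [hS]
    simp only [Matrix.mul_sub, Matrix.sub_mul, Matrix.add_mul, Matrix.mul_add,
      Matrix.mul_smul, Matrix.smul_mul, mat_mul_vecMulVec, vecMulVec_mul_mat,
      vecMulVec_mulVec', vecMulVec_smul_left, hAinv, hvmu, hvmv, hAp, hAq, hγ,
      smul_smul]
    match_scalars
    all_goals try ring
    all_goals try linear_combination hinv
    all_goals linear_combination -hinv
  refine ⟨Matrix.isUnit_det_of_right_inverse hBC, ?_⟩
  rw [Matrix.inv_eq_right_inv hBC]
  rw [neg_smul]
  abel
end
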